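/- Let ψ be a unit vector in ℂ^d. Let X be a finite family of pairs (c_x, A_x) where c_x > 0 and each A_x is a Hermitian d×d complex matrix with operator norm ‖A_x‖ ≤ 1, and define the cost 𝓜(X, ψ) = (∑_x c_x·√(1 − ⟨ψ, A_x ψ⟩²))². Suppose X' is obtained from X by replacing a single term (c, A) by two terms (c₀, B₀) and (c₁, B₁), where B₀, B₁ are Hermitian with ‖B₀‖, ‖B₁‖ ≤ 1, c₀, c₁ > 0, c·A = c₀·B₀ + c₁·B₁, and c₀ + c₁ = c (a norm-preserving sub-decomposition). Then 𝓜(X', ψ) ≤ 𝓜(X, ψ). -/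

import Mathlib

open scoped Matrix Matrix.Norms.L2Operator

/-- The expectation value `⟨ψ, A ψ⟩` (real part) of a matrix `A` on a vector `ψ`. -/
noncomputable def expval {d : ℕ} (A : Matrix (Fin d) (Fin d) ℂ) (ψ : Fin d → ℂ) : ℝ :=
  (star ψ ⬝ᵥ A.mulVec ψ).re

lemma expval_smul {d : ℕ} (r : ℝ) (A : Matrix (Fin d) (Fin d) ℂ) (ψ : Fin d → ℂ) :
    expval (r • A) ψ = r * expval A ψ := by
  simp [expval, Matrix.smul_mulVec, dotProduct_smul]

lemma expval_add {d : ℕ} (A B : Matrix (Fin d) (Fin d) ℂ) (ψ : Fin d → ℂ) :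
    expval (A + B) ψ = expval A ψ + expval B ψ := by
  simp [expval, Matrix.add_mulVec, dotProduct_add]

lemma abs_expval_le {d : ℕ} (B : Matrix (Fin d) (Fin d) ℂ) (ψ : Fin d → ℂ)
    (hψ : star ψ ⬝ᵥ ψ = 1) : |expval B ψ| ≤ ‖B‖ := by
  set ψ' : EuclideanSpace ℂ (Fin d) := (WithLp.equiv 2 _).symm ψ with hψ'
  have hnorm : ‖ψ'‖ = 1 := by
    have h1 : (‖ψ'‖ : ℝ) ^ 2 = 1 := by
      have := InnerProductSpace.norm_sq_eq_re_inner (𝕜 := ℂ) ψ'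
      rw [this, EuclideanSpace.inner_eq_star_dotProduct, dotProduct_comm]
      show RCLike.re (star ψ ⬝ᵥ ψ) = 1
      rw [hψ]
      simp
    nlinarith [norm_nonneg ψ']
  have hinner : (inner ℂ ψ' ((EuclideanSpace.equiv (Fin d) ℂ).symm (B.mulVec ψ)) : ℂ)
      = star ψ ⬝ᵥ B.mulVec ψ := by
    rw [EuclideanSpace.inner_eq_star_dotProduct, dotProduct_comm]; rfl
  have h1 : |expval B ψ| ≤ ‖(star ψ ⬝ᵥ B.mulVec ψ : ℂ)‖ := Complex.abs_re_le_norm _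
  have h2 : ‖(star ψ ⬝ᵥ B.mulVec ψ : ℂ)‖ ≤ ‖ψ'‖ * ‖(EuclideanSpace.equiv (Fin d) ℂ).symm (B.mulVec ψ)‖ := by
    rw [← hinner]; exact norm_inner_le_norm _ _
  have h3 : ‖(EuclideanSpace.equiv (Fin d) ℂ).symm (B.mulVec ψ)‖ ≤ ‖B‖ * ‖ψ'‖ := by
    have := Matrix.l2_opNorm_mulVec B ψ'
    exact this
  calc |expval B ψ| ≤ ‖ψ'‖ * ‖(EuclideanSpace.equiv (Fin d) ℂ).symm (B.mulVec ψ)‖ := h1.trans h2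
    _ ≤ ‖ψ'‖ * (‖B‖ * ‖ψ'‖) := by
        exact mul_le_mul_of_nonneg_left h3 (norm_nonneg _)
    _ = ‖B‖ := by rw [hnorm]; ring

lemma key_ineq (c₀ c₁ a b : ℝ) (hc₀ : 0 ≤ c₀) (hc₁ : 0 ≤ c₁)
    (ha : |a| ≤ 1) (hb : |b| ≤ 1) :
    c₀ * Real.sqrt (1 - a ^ 2) + c₁ * Real.sqrt (1 - b ^ 2)
      ≤ Real.sqrt ((c₀ + c₁) ^ 2 - (c₀ * a + c₁ * b) ^ 2) := by
  have ha2 : a ^ 2 ≤ 1 := by nlinarith [abs_nonneg a, sq_abs a]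
  have hb2 : b ^ 2 ≤ 1 := by nlinarith [abs_nonneg b, sq_abs b]
  have hsa := Real.sq_sqrt (by linarith : (0:ℝ) ≤ 1 - a ^ 2)
  have hsb := Real.sq_sqrt (by linarith : (0:ℝ) ≤ 1 - b ^ 2)
  have hna := Real.sqrt_nonneg (1 - a ^ 2)
  have hnb := Real.sqrt_nonneg (1 - b ^ 2)
  have hcross : Real.sqrt (1 - a ^ 2) * Real.sqrt (1 - b ^ 2) ≤ 1 - a * b := by
    nlinarith [sq_nonneg (a - b), sq_nonneg (Real.sqrt (1 - a ^ 2) - Real.sqrt (1 - b ^ 2)),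
      mul_nonneg hna hnb, sq_nonneg (a*b), abs_mul a b, abs_nonneg (a*b),
      mul_le_one₀ ha (abs_nonneg b) hb, neg_abs_le (a*b), le_abs_self (a*b)]
  rw [show c₀ * Real.sqrt (1 - a ^ 2) + c₁ * Real.sqrt (1 - b ^ 2)
      = Real.sqrt ((c₀ * Real.sqrt (1 - a ^ 2) + c₁ * Real.sqrt (1 - b ^ 2)) ^ 2) from
      (Real.sqrt_sq (by positivity)).symm]
  apply Real.sqrt_le_sqrt
  have e1 : c₀ ^ 2 * (Real.sqrt (1 - a ^ 2)) ^ 2 = c₀ ^ 2 * (1 - a ^ 2) := by rw [hsa]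
  have e2 : c₁ ^ 2 * (Real.sqrt (1 - b ^ 2)) ^ 2 = c₁ ^ 2 * (1 - b ^ 2) := by rw [hsb]
  have e3 : 2 * (c₀ * c₁) * (Real.sqrt (1 - a ^ 2) * Real.sqrt (1 - b ^ 2))
      ≤ 2 * (c₀ * c₁) * (1 - a * b) := by
    apply mul_le_mul_of_nonneg_left hcross
    positivity
  nlinarith [e1, e2, e3]

/-- **Lemma 1** (norm-preserving sub-decompositions have non-increasing cost).
If a single term `(c x₀, A x₀)` of a linear decomposition is replaced by two terms
`(c₀, B₀)` and `(c₁, B₁)` with `c x₀ • A x₀ = c₀ • B₀ + c₁ • B₁` and `c₀ + c₁ = c x₀`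
(norm-preserving), then the cost `𝓜(X, ψ) = (∑_x c_x √(1 − ⟨ψ, A_x ψ⟩²))²` does not
increase, for any unit vector `ψ`.  (Norms are `ℓ²`-operator norms.) -/
theorem stmt_2 {d : ℕ} {ι : Type*} [Fintype ι] [DecidableEq ι]
    (ψ : Fin d → ℂ) (hψ : star ψ ⬝ᵥ ψ = 1)
    (c : ι → ℝ) (A : ι → Matrix (Fin d) (Fin d) ℂ)
    (hc : ∀ x, 0 < c x) (hA : ∀ x, (A x).IsHermitian) (hAn : ∀ x, ‖A x‖ ≤ 1)
    (x₀ : ι) (c₀ c₁ : ℝ) (B₀ B₁ : Matrix (Fin d) (Fin d) ℂ)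
    (hc₀ : 0 < c₀) (hc₁ : 0 < c₁)
    (hB₀ : B₀.IsHermitian) (hB₁ : B₁.IsHermitian)
    (hB₀n : ‖B₀‖ ≤ 1) (hB₁n : ‖B₁‖ ≤ 1)
    (hsplit : c x₀ • A x₀ = c₀ • B₀ + c₁ • B₁)
    (hnp : c₀ + c₁ = c x₀) :
    ((∑ x ∈ Finset.univ.erase x₀, c x * Real.sqrt (1 - expval (A x) ψ ^ 2))
        + c₀ * Real.sqrt (1 - expval B₀ ψ ^ 2)
        + c₁ * Real.sqrt (1 - expval B₁ ψ ^ 2)) ^ 2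
      ≤ (∑ x, c x * Real.sqrt (1 - expval (A x) ψ ^ 2)) ^ 2 := by
  have ha₀ : |expval B₀ ψ| ≤ 1 := (abs_expval_le B₀ ψ hψ).trans hB₀n
  have ha₁ : |expval B₁ ψ| ≤ 1 := (abs_expval_le B₁ ψ hψ).trans hB₁n
  have hlin : c x₀ * expval (A x₀) ψ = c₀ * expval B₀ ψ + c₁ * expval B₁ ψ := by
    have := congrArg (fun M => expval M ψ) hsplit
    simpa [expval_smul, expval_add] using this
  have hkey : c₀ * Real.sqrt (1 - expval B₀ ψ ^ 2) + c₁ * Real.sqrt (1 - expval B₁ ψ ^ 2)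
      ≤ c x₀ * Real.sqrt (1 - expval (A x₀) ψ ^ 2) := by
    have h := key_ineq c₀ c₁ (expval B₀ ψ) (expval B₁ ψ) hc₀.le hc₁.le ha₀ ha₁
    have heq : Real.sqrt ((c₀ + c₁) ^ 2 - (c₀ * expval B₀ ψ + c₁ * expval B₁ ψ) ^ 2)
        = c x₀ * Real.sqrt (1 - expval (A x₀) ψ ^ 2) := by
      rw [hnp, ← hlin, show (c x₀) ^ 2 - (c x₀ * expval (A x₀) ψ) ^ 2
          = (c x₀) ^ 2 * (1 - expval (A x₀) ψ ^ 2) by ring,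
        Real.sqrt_mul (by positivity), Real.sqrt_sq (hc x₀).le]
    rw [heq] at h
    exact h
  have hsum : (∑ x, c x * Real.sqrt (1 - expval (A x) ψ ^ 2))
      = c x₀ * Real.sqrt (1 - expval (A x₀) ψ ^ 2)
        + ∑ x ∈ Finset.univ.erase x₀, c x * Real.sqrt (1 - expval (A x) ψ ^ 2) :=
    (Finset.add_sum_erase _ _ (Finset.mem_univ x₀)).symm
  have hLnn : 0 ≤ (∑ x ∈ Finset.univ.erase x₀, c x * Real.sqrt (1 - expval (A x) ψ ^ 2))
      + c₀ * Real.sqrt (1 - expval B₀ ψ ^ 2) + c₁ * Real.sqrt (1 - expval B₁ ψ ^ 2) := by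
    have : ∀ x ∈ Finset.univ.erase x₀, 0 ≤ c x * Real.sqrt (1 - expval (A x) ψ ^ 2) :=
      fun x _ => mul_nonneg (hc x).le (Real.sqrt_nonneg _)
    have h1 := Finset.sum_nonneg this
    positivity
  apply pow_le_pow_left₀ hLnn
  rw [hsum]
  linarith
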